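/- The ideal I₁ is proper: the whole countable set U is not a finite union of sets v each satisfying property (*). Specifically, if v₀,…,v_n ⊆ U each satisfy (*), then there exists η' ∈ 2^{<ω} such that u_{η'} is disjoint from v₀ ∪ … ∪ v_n. -/

import Mathlib

/-- `AgreeLen ρ ν n`: the longest common initial segment of the infinite branch
`ρ ∈ 2^ω` and the finite sequence `ν ∈ 2^{<ω}` is `ρ↾n`. -/
def AgreeLen (ρ : ℕ → Bool) (ν : List Bool) (n : ℕ) : Prop :=
  n ≤ ν.length ∧ (∀ i < n, ν[i]? = some (ρ i)) ∧
    (n = ν.length ∨ ν[n]? ≠ some (ρ n))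

/-- Property (*) of the ideal `I₁`: for some branch `ρ`, for every `n` there is at
most one pair `(a, ν)` with `a ∈ v ∩ u_ν` and `ρ ∩ ν = ρ↾n`. -/
def StarProp {U : Type*} (u : List Bool → Set U) (v : Set U) : Prop :=
  ∃ ρ : ℕ → Bool, ∀ n : ℕ, ∀ a₁ a₂ : U, ∀ ν₁ ν₂ : List Bool,
    a₁ ∈ v ∩ u ν₁ → a₂ ∈ v ∩ u ν₂ → AgreeLen ρ ν₁ n → AgreeLen ρ ν₂ n →
      a₁ = a₂ ∧ ν₁ = ν₂

/-- The ideal `I₁` is proper: if `v₀, …, v_n` each satisfy (*), then some `u_{η'}`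
is disjoint from their union (so the union of finitely many (*)-sets is not all
of `U`, the `u_ρ` being nonempty and pairwise disjoint with union `U`). -/
theorem ideal_I1_proper {U : Type*} (u : List Bool → Set U)
    (hdisj : ∀ ρ σ : List Bool, ρ ≠ σ → Disjoint (u ρ) (u σ))
    (hne : ∀ ρ : List Bool, (u ρ).Nonempty)
    (hcover : (⋃ ρ : List Bool, u ρ) = Set.univ)
    (n : ℕ) (v : Fin (n + 1) → Set U)
    (hv : ∀ i : Fin (n + 1), StarProp u (v i)) :
    ∃ η' : List Bool, Disjoint (u η') (⋃ i, v i) := by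
  classical
  -- witnesses
  set ρ : Fin (n+1) → ℕ → Bool := fun i => (hv i).choose with hρdef
  have hρ : ∀ i, ∀ m : ℕ, ∀ a₁ a₂ : U, ∀ ν₁ ν₂ : List Bool,
      a₁ ∈ v i ∩ u ν₁ → a₂ ∈ v i ∩ u ν₂ → AgreeLen (ρ i) ν₁ m → AgreeLen (ρ i) ν₂ m →
      a₁ = a₂ ∧ ν₁ = ν₂ := fun i => (hv i).choose_spec
  -- the stem
  set σ : List Bool := List.ofFn (fun k : Fin (n+1) => !ρ k k) with hσdef
  have hσlen : σ.length = n + 1 := by simp [hσdef]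
  have hσget : ∀ k : Fin (n+1), σ[(k : ℕ)]? = some (!ρ k k) := by
    intro k
    rw [hσdef, List.getElem?_ofFn]
    simp [k.isLt]
  -- divergence exists
  have hex : ∀ i : Fin (n+1), ∃ m, σ[m]? ≠ some (ρ i m) := by
    intro i
    exact ⟨i, by rw [hσget i]; simp⟩

  -- agreement length
  set d : Fin (n+1) → ℕ := fun i => Nat.find (hex i) with hddef
  have hdspec : ∀ i, σ[d i]? ≠ some (ρ i (d i)) := fun i => Nat.find_spec (hex i)
  have hdmin : ∀ i, ∀ m < d i, σ[m]? = some (ρ i m) := by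
    intro i m hm
    have := Nat.find_min (hex i) hm
    simpa using this
  have hdlt : ∀ i, d i < σ.length := by
    intro i
    have h1 : d i ≤ (i : ℕ) := Nat.find_le (by rw [hσget i]; simp)
    calc d i ≤ (i : ℕ) := h1
      _ < n + 1 := i.isLt
      _ = σ.length := hσlen.symm
  -- candidates
  set c : Fin (n+2) → List Bool := fun j => σ ++ List.replicate (j : ℕ) true with hcdef
  have hclen : ∀ j, (c j).length = σ.length + (j : ℕ) := by simp [hcdef]
  have hcinj : Function.Injective c := by
    intro j₁ j₂ h
    have := congrArg List.length h
    rw [hclen, hclen] at this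
    exact Fin.ext (by omega)
  have hcget : ∀ j, ∀ m < σ.length, (c j)[m]? = σ[m]? := by
    intro j m hm
    rw [hcdef]
    simp only []
    rw [List.getElem?_append_left hm]
  -- each candidate agrees with ρ i up to exactly d i
  have hagree : ∀ i j, AgreeLen (ρ i) (c j) (d i) := by
    intro i j
    refine ⟨?_, ?_, Or.inr ?_⟩
    · rw [hclen]; exact le_of_lt (lt_of_lt_of_le (hdlt i) (Nat.le_add_right _ _))
    · intro m hm
      rw [hcget j m (lt_trans hm (hdlt i))]
      exact hdmin i m hm
    · rw [hcget j (d i) (hdlt i)]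
      exact hdspec i
  -- for each i, at most one candidate meets v i; pigeonhole
  set g : Fin (n+1) → Fin (n+2) := fun i =>
    if h : ∃ j : Fin (n+2), (v i ∩ u (c j)).Nonempty then h.choose else 0 with hgdef
  have : ¬ Function.Surjective g := by
    intro hs
    have := Fintype.card_le_of_surjective g hs
    simp at this
  rw [Function.Surjective] at this
  push_neg at this
  obtain ⟨j, hj⟩ := this
  refine ⟨c j, Set.disjoint_left.2 ?_⟩
  intro a ha hav
  simp only [Set.mem_iUnion] at hav
  obtain ⟨i, hai⟩ := hav
  have hA : ∃ j' : Fin (n+2), (v i ∩ u (c j')).Nonempty := ⟨j, a, hai, ha⟩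
  obtain ⟨a₀, ha₀⟩ := hA.choose_spec
  have hg : g i = hA.choose := by rw [hgdef]; simp [hA]
  have := (hρ i (d i) a a₀ (c j) (c hA.choose) ⟨hai, ha⟩ ha₀ (hagree i j) (hagree i hA.choose)).2
  have hjj : j = hA.choose := hcinj this
  exact hj i (by rw [hg, hjj])
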